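/- arXiv:1312.3552 — 2 statements merged into one kernel-verified Lean document; each statement's English description precedes it below -/
import Mathlib

section
/- Let G = (A ∪ H, E) be a House Allocation with Ties (HAT) instance and let G₁ = (A ∪ H, E₁) be its first-choice graph. If M is a popular matching of G, then M ∩ E₁ is a maximum matching of G₁. -/
/-!
STATEMENT 0: If `M` is a popular matching of a HAT instance `G`, then `M ∩ E₁` is a
maximum matching of the first-choice graph `G₁`.
-/

/-- A House Allocation with Ties (HAT) instance: agents `A`, houses `H`, an adjacency
relation (each agent ranks the adjacent houses; lower rank means more preferred, ties
allowed), together with a unique last-resort house `l(a)` for each agent `a`, which is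
strictly the least preferred house of `a` and appears only on `a`'s list. -/
structure HATInstance (A H : Type*) where
  adj : A → H → Prop
  rank : A → H → ℕ
  lastResort : A → H
  lastResort_injective : Function.Injective lastResort
  lastResort_adj : ∀ a, adj a (lastResort a)
  lastResort_worst : ∀ a h, adj a h → h ≠ lastResort a → rank a h < rank a (lastResort a)
  lastResort_only : ∀ a a', adj a' (lastResort a) → a' = a

namespace HATInstance

variable {A H : Type*}

/-- The edge set of the bipartite graph `G = (A ∪ H, E)` of the instance. -/
def edgeSet (I : HATInstance A H) : Set (A × H) := {p | I.adj p.1 p.2}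

/-- `M` is a matching contained in the edge set `E`: every agent is in at most one
edge of `M` and every house is in at most one edge of `M`. -/
def IsMatchingIn (E M : Set (A × H)) : Prop :=
  M ⊆ E ∧ (∀ p ∈ M, ∀ q ∈ M, p.1 = q.1 → p = q) ∧ (∀ p ∈ M, ∀ q ∈ M, p.2 = q.2 → p = q)

/-- A maximum (cardinality) matching contained in the edge set `E`. -/
def IsMaxMatchingIn (E M : Set (A × H)) : Prop :=
  IsMatchingIn E M ∧ ∀ N : Set (A × H), IsMatchingIn E N → N.ncard ≤ M.ncard

/-- A matching of the instance `I`. -/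
def IsMatching (I : HATInstance A H) (M : Set (A × H)) : Prop :=
  IsMatchingIn I.edgeSet M

/-- Agent `a` prefers matching `M` to matching `M'`: `a` is matched in `M` and either
unmatched in `M'`, or strictly prefers its house in `M` to its house in `M'`. -/
def Prefers (I : HATInstance A H) (M M' : Set (A × H)) (a : A) : Prop :=
  ∃ h, (a, h) ∈ M ∧ ∀ h', (a, h') ∈ M' → I.rank a h < I.rank a h'

/-- `M` is more popular than `M'`. -/
def MorePopular [Fintype A] (I : HATInstance A H) (M M' : Set (A × H)) : Prop :=
  Nat.card {a | Prefers I M M' a} > Nat.card {a | Prefers I M' M a}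

/-- `M` is a popular matching of `I`: it is a matching and no matching is more
popular than it. -/
def IsPopular [Fintype A] (I : HATInstance A H) (M : Set (A × H)) : Prop :=
  I.IsMatching M ∧ ∀ M', I.IsMatching M' → ¬ MorePopular I M' M

/-- `f(a)`: the set of top-ranked (first-choice) houses of agent `a`. -/
def firstChoices (I : HATInstance A H) (a : A) : Set H :=
  {h | I.adj a h ∧ ∀ h', I.adj a h' → I.rank a h ≤ I.rank a h'}

/-- The edge set `E₁` of the first-choice graph `G₁`. -/
def firstChoiceEdges (I : HATInstance A H) : Set (A × H) :=
  {p | p.2 ∈ I.firstChoices p.1}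

end HATInstance



open HATInstance

namespace PopAux

variable {A H : Type*}

/-- Agents covered by a set of edges. -/
def covA (N : Set (A × H)) : Set A := {a | ∃ h, (a, h) ∈ N}

/-- Houses covered by a set of edges. -/
def covH (N : Set (A × H)) : Set H := {h | ∃ a, (a, h) ∈ N}

lemma agent_unique {E N : Set (A × H)} (hN : IsMatchingIn E N)
    {a : A} {h h' : H} (h1 : (a, h) ∈ N) (h2 : (a, h') ∈ N) : h = h' :=
  congrArg Prod.snd (hN.2.1 _ h1 _ h2 rfl)

lemma house_unique {E N : Set (A × H)} (hN : IsMatchingIn E N)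
    {a b : A} {h : H} (h1 : (a, h) ∈ N) (h2 : (b, h) ∈ N) : a = b :=
  congrArg Prod.fst (hN.2.2 _ h1 _ h2 rfl)

lemma covA_union (X Y : Set (A × H)) : covA (X ∪ Y) = covA X ∪ covA Y := by
  ext a
  constructor
  · rintro ⟨h, hx | hy⟩
    · exact Or.inl ⟨h, hx⟩
    · exact Or.inr ⟨h, hy⟩
  · rintro (⟨h, hx⟩ | ⟨h, hy⟩)
    · exact ⟨h, Or.inl hx⟩
    · exact ⟨h, Or.inr hy⟩

lemma covH_union (X Y : Set (A × H)) : covH (X ∪ Y) = covH X ∪ covH Y := by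
  ext h
  constructor
  · rintro ⟨a, hx | hy⟩
    · exact Or.inl ⟨a, hx⟩
    · exact Or.inr ⟨a, hy⟩
  · rintro (⟨a, hx⟩ | ⟨a, hy⟩)
    · exact ⟨a, Or.inl hx⟩
    · exact ⟨a, Or.inr hy⟩

lemma covA_graph (g : A → H) (S : Set A) : covA ((fun a => (a, g a)) '' S) = S := by
  ext a
  constructor
  · rintro ⟨h, b, hb, hab⟩
    obtain ⟨rfl, -⟩ := Prod.mk.injEq .. ▸ hab
    exact hb
  · intro ha
    exact ⟨g a, a, ha, rfl⟩

lemma covH_graph (g : A → H) (S : Set A) : covH ((fun a => (a, g a)) '' S) = g '' S := by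
  ext h
  constructor
  · rintro ⟨a, b, hb, hab⟩
    obtain ⟨h1, h2⟩ := Prod.mk.injEq .. ▸ hab
    exact ⟨b, hb, h2⟩
  · rintro ⟨b, hb, rfl⟩
    exact ⟨b, b, hb, rfl⟩

lemma covA_insert (p : A × H) (X : Set (A × H)) :
    covA (insert p X) = insert p.1 (covA X) := by
  ext a
  constructor
  · rintro ⟨h, hmem⟩
    rcases hmem with rfl | hx
    · exact Or.inl rfl
    · exact Or.inr ⟨h, hx⟩
  · rintro (rfl | ⟨h, hx⟩)
    · exact ⟨p.2, Or.inl rfl⟩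
    · exact ⟨h, Or.inr hx⟩

lemma covH_insert (p : A × H) (X : Set (A × H)) :
    covH (insert p X) = insert p.2 (covH X) := by
  ext h
  constructor
  · rintro ⟨a, hmem⟩
    rcases hmem with rfl | hx
    · exact Or.inl rfl
    · exact Or.inr ⟨a, hx⟩
  · rintro (rfl | ⟨a, hx⟩)
    · exact ⟨p.1, Or.inl rfl⟩
    · exact ⟨a, Or.inr hx⟩

lemma covA_diff_single {E N : Set (A × H)} (hN : IsMatchingIn E N) {p : A × H}
    (hp : p ∈ N) : covA (N \ {p}) = covA N \ {p.1} := by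
  ext a
  constructor
  · rintro ⟨h, hmem, hne⟩
    refine ⟨⟨h, hmem⟩, ?_⟩
    intro hap
    apply hne
    simp only [Set.mem_singleton_iff] at hap ⊢
    subst hap
    exact hN.2.1 _ hmem _ hp rfl
  · rintro ⟨⟨h, hmem⟩, hne⟩
    refine ⟨h, hmem, ?_⟩
    intro heq
    simp only [Set.mem_singleton_iff] at heq
    exact absurd (congrArg Prod.fst heq) hne

lemma covH_diff_single {E N : Set (A × H)} (hN : IsMatchingIn E N) {p : A × H}
    (hp : p ∈ N) : covH (N \ {p}) = covH N \ {p.2} := by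
  ext h
  constructor
  · rintro ⟨a, hmem, hne⟩
    refine ⟨⟨a, hmem⟩, ?_⟩
    intro hhp
    apply hne
    simp only [Set.mem_singleton_iff] at hhp ⊢
    subst hhp
    exact hN.2.2 _ hmem _ hp rfl
  · rintro ⟨⟨a, hmem⟩, hne⟩
    refine ⟨a, hmem, ?_⟩
    intro heq
    simp only [Set.mem_singleton_iff] at heq
    exact absurd (congrArg Prod.snd heq) hne

lemma ncard_eq_covA [Fintype A] [Fintype H] {E N : Set (A × H)} (hN : IsMatchingIn E N) :
    N.ncard = (covA N).ncard := by
  have : covA N = Prod.fst '' N := by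
    ext a
    exact ⟨fun ⟨h, hx⟩ => ⟨(a, h), hx, rfl⟩, fun ⟨p, hp, he⟩ => ⟨p.2, by rw [show (a, p.2) = p from Prod.ext he.symm rfl]; exact hp⟩⟩
  rw [this, Set.ncard_image_of_injOn]
  intro p hp q hq hpq
  exact hN.2.1 p hp q hq hpq


/-- Agents whose `M`-house is a first choice. -/
def fcS (I : HATInstance A H) (m : A → H) : Set A := {a | m a ∈ I.firstChoices a}

/-- Agents strictly preferring the `N`-derived matching to `M`. -/
def Gain (I : HATInstance A H) (m : A → H) (N : Set (A × H)) : Set A :=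
  {a | a ∈ covA N ∧ a ∉ fcS I m}

/-- Agents strictly preferring `M` to the `N`-derived matching. -/
def Loss (I : HATInstance A H) (m : A → H) (N : Set (A × H)) : Set A :=
  {a | a ∉ covA N ∧ m a ∈ covH N}

section Core

variable [Fintype A] [Fintype H]

lemma swap_elim (I : HATInstance A H) (m : A → H) (hinj : Function.Injective m)
    (hstar : ∀ N, IsMatchingIn I.firstChoiceEdges N →
      (Gain I m N).ncard ≤ (Loss I m N).ncard)
    (Np : Set (A × H)) (hNp : IsMatchingIn I.firstChoiceEdges Np)
    (a₀ x w : A) (hs g : H)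
    (hcA : covA Np = insert a₀ (fcS I m)) (hcH : covH Np = insert hs (m '' fcS I m))
    (ha₀ : a₀ ∉ fcS I m) (hmx : m x = hs) (hxfc : x ∉ fcS I m) (hxa : x ≠ a₀)
    (hw : (w, g) ∈ Np) (hgf : g ∈ I.firstChoices x) : False := by
  have hxcov : x ∉ covA Np := by
    rw [hcA]
    rintro (rfl | hx)
    · exact hxa rfl
    · exact hxfc hx
  set N' : Set (A × H) := insert (x, g) (Np \ {(w, g)}) with hN'def
  have hxw : ∀ p ∈ Np, p.1 ≠ x := by
    intro p hp hpx
    exact hxcov ⟨p.2, by rw [← hpx, Prod.mk.eta]; exact hp⟩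
  have hN' : IsMatchingIn I.firstChoiceEdges N' := by
    refine ⟨?_, ?_, ?_⟩
    · rintro p (rfl | hp)
      · exact hgf
      · exact hNp.1 hp.1
    · rintro p (rfl | hp) q (rfl | hq) hpq
      · rfl
      · exact absurd hpq.symm (hxw q hq.1)
      · exact absurd hpq (hxw p hp.1)
      · exact hNp.2.1 p hp.1 q hq.1 hpq
    · rintro p (rfl | hp) q (rfl | hq) hpq
      · rfl
      · exfalso
        have : q = (w, g) := hNp.2.2 q hq.1 (w, g) hw (by rw [← hpq])
        exact hq.2 this
      · exfalso
        have : p = (w, g) := hNp.2.2 p hp.1 (w, g) hw (by rw [hpq])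
        exact hp.2 this
      · exact hNp.2.2 p hp.1 q hq.1 hpq
  have hcA' : covA N' = insert x (insert a₀ (fcS I m) \ {w}) := by
    rw [hN'def, covA_insert, covA_diff_single hNp hw, hcA]
  have hcH' : covH N' = insert hs (m '' fcS I m) := by
    rw [hN'def, covH_insert, covH_diff_single hNp hw]
    have hgmem : g ∈ covH Np := ⟨w, hw⟩
    show insert g (covH Np \ {g}) = _
    rw [Set.insert_diff_singleton, Set.insert_eq_self.mpr hgmem, hcH]
  have key := hstar N' hN'
  by_cases hwa : w = a₀
  · subst hwa
    -- Gain contains x, Loss is empty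
    have hG : ({x} : Set A) ⊆ Gain I m N' := by
      rintro z rfl
      exact ⟨by rw [hcA']; exact Or.inl rfl, hxfc⟩
    have hL : Loss I m N' = ∅ := by
      ext z
      simp only [Set.mem_empty_iff_false, iff_false]
      rintro ⟨hz1, hz2⟩
      rw [hcH'] at hz2
      apply hz1
      rw [hcA']
      rcases hz2 with hz2 | ⟨c, hc, hzc⟩
      · left
        exact hinj (by rw [hmx, hz2])
      · right
        have : z = c := hinj hzc.symm
        subst this
        refine ⟨Or.inr hc, ?_⟩
        rintro rfl
        exact ha₀ hc
    have h1 : 1 ≤ (Gain I m N').ncard := by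
      have := Set.ncard_le_ncard hG (Set.toFinite _)
      simpa using this
    rw [hL] at key
    simp [Set.ncard_empty] at key
    omega
  · have hwfc : w ∈ fcS I m := by
      have : w ∈ covA Np := ⟨g, hw⟩
      rw [hcA] at this
      rcases this with rfl | h
      · exact absurd rfl hwa
      · exact h
    have hG : ({a₀, x} : Set A) ⊆ Gain I m N' := by
      rintro z (rfl | rfl)
      · refine ⟨?_, ha₀⟩
        rw [hcA']
        exact Or.inr ⟨Or.inl rfl, fun h => hwa ((Set.mem_singleton_iff.mp h).symm)⟩
      · exact ⟨by rw [hcA']; exact Or.inl rfl, hxfc⟩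
    have hL : Loss I m N' ⊆ {w} := by
      rintro z ⟨hz1, hz2⟩
      rw [hcH'] at hz2
      rcases hz2 with hz2 | ⟨c, hc, hzc⟩
      · exfalso
        have : z = x := hinj (by rw [hmx, hz2])
        subst this
        exact hz1 (by rw [hcA']; exact Or.inl rfl)
      · have : z = c := hinj hzc.symm
        subst this
        by_contra hzw
        apply hz1
        rw [hcA']
        exact Or.inr ⟨Or.inr hc, hzw⟩
    have h2 : 2 ≤ (Gain I m N').ncard := by
      have := Set.ncard_le_ncard hG (Set.toFinite _)
      rwa [Set.ncard_pair (Ne.symm hxa)] at this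
    have h1 : (Loss I m N').ncard ≤ 1 := by
      have := Set.ncard_le_ncard hL (Set.toFinite _)
      simpa using this
    omega

lemma extend_elim (I : HATInstance A H) (m : A → H) (hinj : Function.Injective m)
    (hstar : ∀ N, IsMatchingIn I.firstChoiceEdges N →
      (Gain I m N).ncard ≤ (Loss I m N).ncard)
    (Np : Set (A × H)) (hNp : IsMatchingIn I.firstChoiceEdges Np)
    (a₀ x : A) (hs g : H)
    (hcA : covA Np = insert a₀ (fcS I m)) (hcH : covH Np = insert hs (m '' fcS I m))
    (ha₀ : a₀ ∉ fcS I m) (hmx : m x = hs) (hxfc : x ∉ fcS I m) (hxa : x ≠ a₀)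
    (hgcov : g ∉ covH Np) (hgf : g ∈ I.firstChoices x) : False := by
  have hxcov : x ∉ covA Np := by
    rw [hcA]
    rintro (rfl | hx)
    · exact hxa rfl
    · exact hxfc hx
  have hxw : ∀ p ∈ Np, p.1 ≠ x := by
    intro p hp hpx
    exact hxcov ⟨p.2, by rw [← hpx, Prod.mk.eta]; exact hp⟩
  have hgw : ∀ p ∈ Np, p.2 ≠ g := by
    intro p hp hpg
    exact hgcov ⟨p.1, by rw [← hpg, Prod.mk.eta]; exact hp⟩
  set N' : Set (A × H) := insert (x, g) Np with hN'def
  have hN' : IsMatchingIn I.firstChoiceEdges N' := by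
    refine ⟨?_, ?_, ?_⟩
    · rintro p (rfl | hp)
      · exact hgf
      · exact hNp.1 hp
    · rintro p (rfl | hp) q (rfl | hq) hpq
      · rfl
      · exact absurd hpq.symm (hxw q hq)
      · exact absurd hpq (hxw p hp)
      · exact hNp.2.1 p hp q hq hpq
    · rintro p (rfl | hp) q (rfl | hq) hpq
      · rfl
      · exact absurd hpq.symm (hgw q hq)
      · exact absurd hpq (hgw p hp)
      · exact hNp.2.2 p hp q hq hpq
  have hcA' : covA N' = insert x (insert a₀ (fcS I m)) := by
    rw [hN'def, covA_insert, hcA]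
  have hcH' : covH N' = insert g (insert hs (m '' fcS I m)) := by
    rw [hN'def, covH_insert, hcH]
  have key := hstar N' hN'
  have hG : ({a₀, x} : Set A) ⊆ Gain I m N' := by
    rintro z (rfl | rfl)
    · exact ⟨by rw [hcA']; exact Or.inr (Or.inl rfl), ha₀⟩
    · exact ⟨by rw [hcA']; exact Or.inl rfl, hxfc⟩
  have hLsub : ∀ z ∈ Loss I m N', m z = g := by
    rintro z ⟨hz1, hz2⟩
    rw [hcH'] at hz2
    rcases hz2 with hz2 | hz2 | ⟨c, hc, hzc⟩
    · exact hz2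
    · exfalso
      have : z = x := hinj (by rw [hmx, hz2])
      subst this
      exact hz1 (by rw [hcA']; exact Or.inl rfl)
    · exfalso
      have : z = c := hinj hzc.symm
      subst this
      exact hz1 (by rw [hcA']; exact Or.inr (Or.inr hc))
  have h1 : (Loss I m N').ncard ≤ 1 := by
    by_cases hex : (Loss I m N').Nonempty
    · obtain ⟨z₀, hz₀⟩ := hex
      have : Loss I m N' ⊆ {z₀} := by
        intro z hz
        have : m z = m z₀ := by rw [hLsub z hz, hLsub z₀ hz₀]
        exact hinj this
      have := Set.ncard_le_ncard this (Set.toFinite _)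
      simpa using this
    · rw [Set.not_nonempty_iff_eq_empty.mp hex]
      simp
  have h2 : 2 ≤ (Gain I m N').ncard := by
    have := Set.ncard_le_ncard hG (Set.toFinite _)
    rwa [Set.ncard_pair (Ne.symm hxa)] at this
  omega

end Core



section Core2

variable {A H : Type*} [Fintype A] [Fintype H]

lemma success_elim (I : HATInstance A H) (m : A → H) (hinj : Function.Injective m)
    (hfc : ∀ a, (I.firstChoices a).Nonempty)
    (hstar : ∀ N, IsMatchingIn I.firstChoiceEdges N →
      (Gain I m N).ncard ≤ (Loss I m N).ncard)
    (P : Set A) (a₀ : A) (ρ : A → H) (hs : H)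
    (hPa : a₀ ∈ P) (ha₀ : a₀ ∉ fcS I m) (hPfc : P \ {a₀} ⊆ fcS I m)
    (hρf : ∀ q ∈ P, ρ q ∈ I.firstChoices q) (hρinj : Set.InjOn ρ P)
    (hhs : hs ∉ m '' fcS I m) (himg : ρ '' P = m '' (P \ {a₀}) ∪ {hs}) : False := by
  classical
  set Np : Set (A × H) :=
    ((fun q => (q, ρ q)) '' P) ∪ ((fun c => (c, m c)) '' (fcS I m \ P)) with hNpdef
  have hunion : (P \ {a₀}) ∪ (fcS I m \ P) = fcS I m := by
    ext c
    constructor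
    · rintro (hc | hc)
      · exact hPfc hc
      · exact hc.1
    · intro hc
      by_cases hcP : c ∈ P
      · left
        refine ⟨hcP, ?_⟩
        rintro rfl
        exact ha₀ hc
      · exact Or.inr ⟨hc, hcP⟩
  have hNp : IsMatchingIn I.firstChoiceEdges Np := by
    refine ⟨?_, ?_, ?_⟩
    · rintro p (⟨q, hq, rfl⟩ | ⟨c, hc, rfl⟩)
      · exact hρf q hq
      · exact hc.1
    · rintro p (⟨q, hq, rfl⟩ | ⟨q, hq, rfl⟩) p' (⟨q', hq', rfl⟩ | ⟨q', hq', rfl⟩) hpq <;>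
        simp only at hpq
      · subst hpq; rfl
      · exact absurd (hpq ▸ hq) hq'.2
      · exact absurd (hpq ▸ hq') hq.2
      · subst hpq; rfl
    · rintro p (⟨q, hq, rfl⟩ | ⟨q, hq, rfl⟩) p' (⟨q', hq', rfl⟩ | ⟨q', hq', rfl⟩) hpq <;>
        simp only at hpq
      · rw [hρinj hq hq' hpq]
      · -- ρ q = m q', q ∈ P, q' ∈ fcS \ P
        exfalso
        have : ρ q ∈ m '' (P \ {a₀}) ∪ {hs} := himg ▸ ⟨q, hq, rfl⟩
        rcases this with ⟨p₂, hp₂, hp₂e⟩ | he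
        · have : p₂ = q' := hinj (by rw [hp₂e, hpq])
          subst this
          exact hq'.2 hp₂.1
        · simp only [Set.mem_singleton_iff] at he
          exact hhs ⟨q', hq'.1, by rw [← hpq, he]⟩
      · exfalso
        have : ρ q' ∈ m '' (P \ {a₀}) ∪ {hs} := himg ▸ ⟨q', hq', rfl⟩
        rcases this with ⟨p₂, hp₂, hp₂e⟩ | he
        · have : p₂ = q := hinj (by rw [hp₂e, ← hpq])
          subst this
          exact hq.2 hp₂.1
        · simp only [Set.mem_singleton_iff] at he
          exact hhs ⟨q, hq.1, by rw [hpq, he]⟩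
      · rw [hinj hpq]
  have hcA : covA Np = insert a₀ (fcS I m) := by
    rw [hNpdef, covA_union, covA_graph, covA_graph]
    ext z
    constructor
    · rintro (hz | hz)
      · by_cases hza : z = a₀
        · exact Or.inl hza
        · exact Or.inr (hPfc ⟨hz, hza⟩)
      · exact Or.inr hz.1
    · rintro (rfl | hz)
      · exact Or.inl hPa
      · by_cases hzP : z ∈ P
        · exact Or.inl hzP
        · exact Or.inr ⟨hz, hzP⟩
  have hcH : covH Np = insert hs (m '' fcS I m) := by
    rw [hNpdef, covH_union, covH_graph, covH_graph, himg, Set.union_right_comm,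
      ← Set.image_union, hunion, Set.union_singleton]
  by_cases hx : ∃ x, m x = hs ∧ x ∉ fcS I m ∧ x ≠ a₀
  · obtain ⟨x, hmx, hxfc, hxa⟩ := hx
    obtain ⟨g, hgf⟩ := hfc x
    by_cases hgcov : g ∈ covH Np
    · obtain ⟨w, hw⟩ := hgcov
      exact swap_elim I m hinj hstar Np hNp a₀ x w hs g hcA hcH ha₀ hmx hxfc hxa hw hgf
    · exact extend_elim I m hinj hstar Np hNp a₀ x hs g hcA hcH ha₀ hmx hxfc hxa hgcov hgf
  · push_neg at hx
    have key := hstar Np hNp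
    have hG : ({a₀} : Set A) ⊆ Gain I m Np := by
      rintro z rfl
      exact ⟨by rw [hcA]; exact Or.inl rfl, ha₀⟩
    have hL : Loss I m Np = ∅ := by
      ext z
      simp only [Set.mem_empty_iff_false, iff_false]
      rintro ⟨hz1, hz2⟩
      rw [hcH] at hz2
      apply hz1
      rw [hcA]
      rcases hz2 with hz2 | ⟨c, hc, hzc⟩
      · rcases (em (z ∈ fcS I m)) with h | h
        · exact Or.inr h
        · exact Or.inl (hx z hz2 h)
      · have : z = c := hinj hzc.symm
        subst this
        exact Or.inr hc
    have h1 : 1 ≤ (Gain I m Np).ncard := by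
      have := Set.ncard_le_ncard hG (Set.toFinite _)
      simpa using this
    rw [hL] at key
    simp [Set.ncard_empty] at key
    omega

lemma chain (I : HATInstance A H) (m : A → H)
    (N : Set (A × H)) (hN : IsMatchingIn I.firstChoiceEdges N)
    (a₀ : A) (ha₀ : a₀ ∉ fcS I m)
    (nh : A → H) (hnh : ∀ a ∈ covA N, (a, nh a) ∈ N) :
    ∀ (k : ℕ) (Q : Set A) (x : A), (fcS I m \ Q).ncard ≤ k → Q ⊆ covA N → x ∈ Q → a₀ ∈ Q →
      Q \ {a₀} ⊆ fcS I m → m '' (Q \ {a₀}) = nh '' Q \ {nh x} →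
      (∃ P hs, a₀ ∈ P ∧ P ⊆ covA N ∧ P \ {a₀} ⊆ fcS I m ∧ hs ∉ m '' fcS I m ∧
        nh '' P = m '' (P \ {a₀}) ∪ {hs}) ∨
      (∃ y Q' x', y ∈ fcS I m ∧ y ∉ covA N ∧ Q' ⊆ covA N ∧ x' ∈ Q' ∧ a₀ ∈ Q' ∧
        Q' \ {a₀} ⊆ fcS I m ∧ m '' (Q' \ {a₀}) = nh '' Q' \ {nh x'} ∧ nh x' = m y) := by
  have hnhinj : ∀ a ∈ covA N, ∀ b ∈ covA N, nh a = nh b → a = b := by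
    intro a ha b hb hab
    exact house_unique hN (hnh a ha) (hab ▸ hnh b hb)
  intro k
  induction k with
  | zero =>
    intro Q x hk hQcov hxQ haQ hQfc hinv
    by_cases hmem : nh x ∈ m '' fcS I m
    · obtain ⟨y, hyfc, hym⟩ := hmem
      have hyQ : y ∉ Q := by
        intro hyQ
        have hya : y ≠ a₀ := by rintro rfl; exact ha₀ hyfc
        have : m y ∈ nh '' Q \ {nh x} := hinv ▸ ⟨y, ⟨hyQ, hya⟩, rfl⟩
        exact this.2 hym
      by_cases hycov : y ∈ covA N
      · exfalso
        have hmem2 : y ∈ fcS I m \ Q := ⟨hyfc, hyQ⟩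
        have : 0 < (fcS I m \ Q).ncard :=
          (Set.ncard_pos (Set.toFinite _)).mpr ⟨y, hmem2⟩
        omega
      · exact Or.inr ⟨y, Q, x, hyfc, hycov, hQcov, hxQ, haQ, hQfc, hinv, hym.symm⟩
    · left
      refine ⟨Q, nh x, haQ, hQcov, hQfc, hmem, ?_⟩
      have hx1 : nh x ∈ nh '' Q := ⟨x, hxQ, rfl⟩
      rw [hinv, Set.diff_union_self, Set.union_eq_self_of_subset_right
        (Set.singleton_subset_iff.mpr hx1)]
  | succ n ih =>
    intro Q x hk hQcov hxQ haQ hQfc hinv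
    by_cases hmem : nh x ∈ m '' fcS I m
    · obtain ⟨y, hyfc, hym⟩ := hmem
      have hyQ : y ∉ Q := by
        intro hyQ
        have hya : y ≠ a₀ := by rintro rfl; exact ha₀ hyfc
        have : m y ∈ nh '' Q \ {nh x} := hinv ▸ ⟨y, ⟨hyQ, hya⟩, rfl⟩
        exact this.2 hym
      by_cases hycov : y ∈ covA N
      · -- recurse with Q' = insert y Q, x' = y
        have hya : y ≠ a₀ := by rintro rfl; exact ha₀ hyfc
        have hk' : (fcS I m \ insert y Q).ncard ≤ n := by
          have hyd : y ∈ fcS I m \ Q := ⟨hyfc, hyQ⟩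
          have heq : fcS I m \ insert y Q = (fcS I m \ Q) \ {y} := by
            ext z
            simp only [Set.mem_diff, Set.mem_insert_iff, Set.mem_singleton_iff]
            tauto
          rw [heq, Set.ncard_diff_singleton_of_mem hyd]
          have : 0 < (fcS I m \ Q).ncard := (Set.ncard_pos (Set.toFinite _)).mpr ⟨y, hyd⟩
          omega
        have hnhy : nh y ∉ nh '' Q := by
          rintro ⟨q, hqQ, hq⟩
          exact hyQ (hnhinj q (hQcov hqQ) y hycov hq ▸ hqQ)
        have hinv' : m '' (insert y Q \ {a₀}) = nh '' insert y Q \ {nh y} := by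
          have h1 : insert y Q \ {a₀} = insert y (Q \ {a₀}) := by
            ext z
            simp only [Set.mem_diff, Set.mem_insert_iff, Set.mem_singleton_iff]
            constructor
            · rintro ⟨rfl | hz, hza⟩
              · exact Or.inl rfl
              · exact Or.inr ⟨hz, hza⟩
            · rintro (rfl | ⟨hz, hza⟩)
              · exact ⟨Or.inl rfl, hya⟩
              · exact ⟨Or.inr hz, hza⟩
          have hx1 : nh x ∈ nh '' Q := ⟨x, hxQ, rfl⟩
          rw [h1, Set.image_insert_eq, hinv, hym, Set.image_insert_eq]
          rw [Set.insert_diff_singleton, Set.insert_eq_self.mpr hx1]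
          rw [Set.insert_diff_of_mem _ (Set.mem_singleton (nh y))]
          rw [Set.diff_singleton_eq_self hnhy]
        exact ih (insert y Q) y hk' (Set.insert_subset hycov hQcov)
          (Set.mem_insert y Q) (Set.mem_insert_of_mem y haQ)
          (by
            intro z hz
            rcases hz.1 with rfl | hzQ
            · exact hyfc
            · exact hQfc ⟨hzQ, hz.2⟩) hinv'
      · exact Or.inr ⟨y, Q, x, hyfc, hycov, hQcov, hxQ, haQ, hQfc, hinv, hym.symm⟩
    · left
      refine ⟨Q, nh x, haQ, hQcov, hQfc, hmem, ?_⟩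
      have hx1 : nh x ∈ nh '' Q := ⟨x, hxQ, rfl⟩
      rw [hinv, Set.diff_union_self, Set.union_eq_self_of_subset_right
        (Set.singleton_subset_iff.mpr hx1)]

end Core2


section Core3

variable {A H : Type*} [Fintype A] [Fintype H]

lemma outer (I : HATInstance A H) (m : A → H) (hinj : Function.Injective m)
    (hfc : ∀ a, (I.firstChoices a).Nonempty)
    (hstar : ∀ N, IsMatchingIn I.firstChoiceEdges N →
      (Gain I m N).ncard ≤ (Loss I m N).ncard) :
    ∀ (u : ℕ) (N : Set (A × H)), IsMatchingIn I.firstChoiceEdges N →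
      (fcS I m \ covA N).ncard = u → (fcS I m).ncard < N.ncard → False := by
  intro u
  induction u using Nat.strong_induction_on with
  | _ u ih =>
  intro N hN hu hlt
  classical
  -- there is a covered agent not in fcS
  have hnsub : ¬ (covA N ⊆ fcS I m) := by
    intro hsub
    have := Set.ncard_le_ncard hsub (Set.toFinite _)
    rw [← ncard_eq_covA hN] at this
    omega
  obtain ⟨a₀, ha₀cov, ha₀⟩ := Set.not_subset.mp hnsub
  set nh : A → H := fun a => if h : ∃ hh, (a, hh) ∈ N then h.choose else m a with hnhdef
  have hnh : ∀ a ∈ covA N, (a, nh a) ∈ N := by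
    rintro a ⟨hh, hmem⟩
    have hex : ∃ hh, (a, hh) ∈ N := ⟨hh, hmem⟩
    simp only [hnhdef, dif_pos hex]
    exact hex.choose_spec
  have hinit : m '' (({a₀} : Set A) \ {a₀}) = nh '' {a₀} \ {nh a₀} := by
    simp
  rcases chain I m N hN a₀ ha₀ nh hnh ((fcS I m \ {a₀}).ncard) {a₀} a₀ le_rfl
      (Set.singleton_subset_iff.mpr ha₀cov) rfl rfl
      (by simp) hinit with
    ⟨P, hs, hPa, hPcov, hPfc, hhs, himg⟩ | ⟨y, Q, x, hyfc, hycov, hQcov, hxQ, haQ, hQfc, hinv, hnx⟩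
  · exact success_elim I m hinj hfc hstar P a₀ nh hs hPa ha₀ hPfc
      (fun q hq => hN.1 (hnh q (hPcov hq)))
      (fun p hp q hq hpq => house_unique hN (hnh p (hPcov hp)) (hpq ▸ hnh q (hPcov hq)))
      hhs himg
  · -- dead end: rotate
    set S : Set A := insert y (Q \ {a₀}) with hSdef
    set N' : Set (A × H) := ((fun q => (q, m q)) '' S) ∪ {p ∈ N | p.1 ∉ Q} with hN'def
    have hSfc : S ⊆ fcS I m := by
      rintro z (rfl | hz)
      · exact hyfc
      · exact hQfc hz
    have hrest : ∀ p ∈ N, p.1 ∉ Q → p.2 ∉ m '' S := by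
      rintro p hp hpQ ⟨z, hz, hze⟩
      rcases hz with rfl | hz
      · -- m y = nh x
        have hxcov := hQcov hxQ
        have : p.1 = x := house_unique hN (by rw [show p = (p.1, p.2) from rfl] at hp; exact hp)
          (by rw [show p.2 = nh x from by rw [← hze, hnx]] ; exact hnh x hxcov)
        exact hpQ (this ▸ hxQ)
      · have : m z ∈ nh '' Q \ {nh x} := hinv ▸ ⟨z, hz, rfl⟩
        obtain ⟨⟨q', hq', hq'e⟩, -⟩ := this
        have : p.1 = q' := house_unique hN
          (by rw [show p = (p.1, p.2) from rfl] at hp; exact hp)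
          (by rw [show p.2 = nh q' from by rw [← hze, hq'e]]; exact hnh q' (hQcov hq'))
        exact hpQ (this ▸ hq')
    have hN' : IsMatchingIn I.firstChoiceEdges N' := by
      refine ⟨?_, ?_, ?_⟩
      · rintro p (⟨z, hz, rfl⟩ | hp)
        · exact hSfc hz
        · exact hN.1 hp.1
      · rintro p (⟨z, hz, rfl⟩ | hp) q (⟨z', hz', rfl⟩ | hq) hpq
        · simp only at hpq; subst hpq; rfl
        · exfalso
          simp only at hpq
          subst hpq
          rcases hz with rfl | hz
          · exact hycov ⟨q.2, by rw [show (q.1, q.2) = q from rfl]; exact hq.1⟩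
          · exact hq.2 hz.1
        · exfalso
          simp only at hpq
          rcases hz' with h | h
          · subst h; rw [← hpq] at hycov
            exact hycov ⟨p.2, by rw [show (p.1, p.2) = p from rfl]; exact hp.1⟩
          · exact hp.2 (hpq ▸ h.1)
        · exact hN.2.1 p hp.1 q hq.1 hpq
      · rintro p (⟨z, hz, rfl⟩ | hp) q (⟨z', hz', rfl⟩ | hq) hpq
        · simp only at hpq
          rw [hinj hpq]
        · exfalso
          exact hrest q hq.1 hq.2 ⟨z, hz, hpq⟩
        · exfalso
          exact hrest p hp.1 hp.2 ⟨z', hz', hpq.symm⟩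
        · exact hN.2.2 p hp.1 q hq.1 hpq
    have hcovrest : covA {p ∈ N | p.1 ∉ Q} = covA N \ Q := by
      ext z
      constructor
      · rintro ⟨h, hmem, hz⟩
        exact ⟨⟨h, hmem⟩, hz⟩
      · rintro ⟨⟨h, hmem⟩, hz⟩
        exact ⟨h, hmem, hz⟩
    have hcA' : covA N' = insert y (covA N \ {a₀}) := by
      rw [hN'def, covA_union, covA_graph, hcovrest, hSdef]
      ext z
      simp only [Set.mem_union, Set.mem_insert_iff, Set.mem_diff, Set.mem_singleton_iff]
      constructor
      · rintro ((rfl | ⟨hz, hza⟩) | ⟨hz, hzQ⟩)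
        · exact Or.inl rfl
        · exact Or.inr ⟨hQcov hz, hza⟩
        · refine Or.inr ⟨hz, ?_⟩
          rintro rfl
          exact hzQ haQ
      · rintro (rfl | ⟨hz, hza⟩)
        · exact Or.inl (Or.inl rfl)
        · by_cases hzQ : z ∈ Q
          · exact Or.inl (Or.inr ⟨hzQ, hza⟩)
          · exact Or.inr ⟨hz, hzQ⟩
    have hyA : y ∉ covA N \ {a₀} := fun h => hycov h.1
    have ha₀A : a₀ ∈ covA N := ha₀cov
    have hcard' : N'.ncard = N.ncard := by
      rw [ncard_eq_covA hN', ncard_eq_covA hN, hcA',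
        Set.ncard_insert_of_notMem hyA (Set.toFinite _),
        Set.ncard_diff_singleton_of_mem ha₀A]
      have : 0 < (covA N).ncard := (Set.ncard_pos (Set.toFinite _)).mpr ⟨a₀, ha₀A⟩
      omega
    have hmeas' : fcS I m \ covA N' = (fcS I m \ covA N) \ {y} := by
      rw [hcA']
      ext z
      simp only [Set.mem_diff, Set.mem_insert_iff, Set.mem_singleton_iff]
      constructor
      · rintro ⟨hz, hz2⟩
        exact ⟨⟨hz, fun hzc => hz2 (Or.inr ⟨hzc, fun h => ha₀ (h ▸ hz)⟩)⟩,
          fun h => hz2 (Or.inl h)⟩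
      · rintro ⟨⟨hz, hzc⟩, hzy⟩
        refine ⟨hz, ?_⟩
        rintro (rfl | ⟨hc, -⟩)
        · exact hzy rfl
        · exact hzc hc
    have hylt : y ∈ fcS I m \ covA N := ⟨hyfc, hycov⟩
    have hlt' : (fcS I m \ covA N').ncard < u := by
      rw [hmeas', Set.ncard_diff_singleton_of_mem hylt]
      have : 0 < (fcS I m \ covA N).ncard := (Set.ncard_pos (Set.toFinite _)).mpr ⟨y, hylt⟩
      omega
    exact ih _ hlt' N' hN' rfl (hcard' ▸ hlt)

lemma core (I : HATInstance A H) (m : A → H) (hinj : Function.Injective m)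
    (hfc : ∀ a, (I.firstChoices a).Nonempty)
    (hstar : ∀ N, IsMatchingIn I.firstChoiceEdges N →
      (Gain I m N).ncard ≤ (Loss I m N).ncard)
    (N : Set (A × H)) (hN : IsMatchingIn I.firstChoiceEdges N) :
    N.ncard ≤ (fcS I m).ncard := by
  by_contra hcon
  push_neg at hcon
  exact outer I m hinj hfc hstar _ N hN rfl hcon

end Core3


section Popularity

variable {A H : Type*}

lemma first_nonempty [Fintype H] (I : HATInstance A H) (a : A) :
    (I.firstChoices a).Nonempty := by
  classical
  have hne : (Finset.univ.filter (fun h => I.adj a h)).Nonempty :=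
    ⟨I.lastResort a, by simp [I.lastResort_adj a]⟩
  obtain ⟨h₀, hmem, hmin⟩ := Finset.exists_min_image _ (I.rank a) hne
  simp only [Finset.mem_filter, Finset.mem_univ, true_and] at hmem
  exact ⟨h₀, hmem, fun h' hadj => hmin h' (by simp [hadj])⟩

lemma all_matched [Fintype A] (I : HATInstance A H) (M : Set (A × H))
    (hM : IsPopular I M) (a₀ : A) : ∃ h, (a₀, h) ∈ M := by
  by_contra hcon
  push_neg at hcon
  set M' : Set (A × H) := insert (a₀, I.lastResort a₀) M with hM'def
  have hrow : ∀ p ∈ M, p.1 ≠ a₀ := by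
    intro p hp hpe
    exact hcon p.2 (by rw [show (a₀, p.2) = p from Prod.ext hpe.symm rfl]; exact hp)
  have hM' : I.IsMatching M' := by
    refine ⟨?_, ?_, ?_⟩
    · rintro p (rfl | hp)
      · exact I.lastResort_adj a₀
      · exact hM.1.1 hp
    · rintro p (rfl | hp) q (rfl | hq) hpq
      · rfl
      · exact absurd hpq.symm (hrow q hq)
      · exact absurd hpq (hrow p hp)
      · exact hM.1.2.1 p hp q hq hpq
    · rintro p (rfl | hp) q (rfl | hq) hpq
      · rfl
      · exfalso
        have hadj : I.adj q.1 (I.lastResort a₀) := by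
          have h2 : I.adj q.1 q.2 := hM.1.1 hq
          rw [← hpq] at h2
          exact h2
        exact hrow q hq (I.lastResort_only a₀ q.1 hadj)
      · exfalso
        have hadj : I.adj p.1 (I.lastResort a₀) := by
          have h2 : I.adj p.1 p.2 := hM.1.1 hp
          rw [hpq] at h2
          exact h2
        exact hrow p hp (I.lastResort_only a₀ p.1 hadj)
      · exact hM.1.2.2 p hp q hq hpq
  apply hM.2 M' hM'
  have h1 : {a | Prefers I M M' a} = ∅ := by
    ext z
    simp only [Set.mem_empty_iff_false, iff_false, Set.mem_setOf_eq]
    rintro ⟨h, hmem, hlt⟩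
    exact lt_irrefl _ (hlt h (Or.inr hmem))
  have h2 : a₀ ∈ {a | Prefers I M' M a} :=
    ⟨I.lastResort a₀, Or.inl rfl, fun h' hh' => absurd hh' (hcon h')⟩
  show Nat.card {a | Prefers I M' M a} > Nat.card {a | Prefers I M M' a}
  rw [Nat.card_coe_set_eq, Nat.card_coe_set_eq, h1]
  have : 0 < {a | Prefers I M' M a}.ncard :=
    (Set.ncard_pos (Set.toFinite _)).mpr ⟨a₀, h2⟩
  simpa using this

lemma star [Fintype A] [Fintype H] (I : HATInstance A H) (M : Set (A × H))
    (hM : IsPopular I M) (m : A → H) (hmeq : ∀ p : A × H, p ∈ M ↔ p.2 = m p.1)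
    (N : Set (A × H)) (hN : IsMatchingIn I.firstChoiceEdges N) :
    (Gain I m N).ncard ≤ (Loss I m N).ncard := by
  classical
  have hmM : ∀ a, (a, m a) ∈ M := fun a => (hmeq _).mpr rfl
  have hadjm : ∀ a, I.adj a (m a) := fun a => hM.1.1 (hmM a)
  have hinj : Function.Injective m := by
    intro a b hab
    exact house_unique hM.1 (hmM a) (by rw [hab]; exact hmM b)
  have hE₁E : I.firstChoiceEdges ⊆ I.edgeSet := fun p hp => hp.1
  set m' : A → H := fun a => if h : ∃ hh, (a, hh) ∈ N then h.choose else
    (if m a ∈ covH N then I.lastResort a else m a) with hm'def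
  have hm'cases : ∀ a, (a ∈ covA N ∧ (a, m' a) ∈ N) ∨
      (a ∉ covA N ∧ m a ∈ covH N ∧ m' a = I.lastResort a) ∨
      (a ∉ covA N ∧ m a ∉ covH N ∧ m' a = m a) := by
    intro a
    by_cases h1 : ∃ hh, (a, hh) ∈ N
    · exact Or.inl ⟨h1, by simp only [hm'def, dif_pos h1]; exact h1.choose_spec⟩
    · have hna : a ∉ covA N := h1
      by_cases h2 : m a ∈ covH N
      · exact Or.inr (Or.inl ⟨hna, h2, by simp only [hm'def, dif_neg h1, if_pos h2]⟩)
      · exact Or.inr (Or.inr ⟨hna, h2, by simp only [hm'def, dif_neg h1, if_neg h2]⟩)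
  have hm'f : ∀ a ∈ covA N, m' a ∈ I.firstChoices a := by
    intro a ha
    rcases hm'cases a with ⟨-, haN⟩ | ⟨ha', -⟩ | ⟨ha', -⟩
    · exact hN.1 haN
    · exact absurd ha ha'
    · exact absurd ha ha'
  have hadj' : ∀ a, I.adj a (m' a) := by
    intro a
    rcases hm'cases a with ⟨ha, haN⟩ | ⟨-, -, hae⟩ | ⟨-, -, hae⟩
    · exact (hm'f a ha).1
    · rw [hae]; exact I.lastResort_adj a
    · rw [hae]; exact hadjm a
  have hml : ∀ a, a ∉ covA N → m a ∈ covH N → m a ≠ I.lastResort a := by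
    intro a hcov hma heq
    rw [heq] at hma
    obtain ⟨x, hx⟩ := hma
    have hxa : x = a := I.lastResort_only a x (hE₁E (hN.1 hx))
    subst hxa
    exact hcov ⟨_, hx⟩
  have hm'inj : Function.Injective m' := by
    intro a b hab
    rcases hm'cases a with ⟨ha, haN⟩ | ⟨ha, haH, hae⟩ | ⟨ha, haH, hae⟩ <;>
      rcases hm'cases b with ⟨hb, hbN⟩ | ⟨hb, hbH, hbe⟩ | ⟨hb, hbH, hbe⟩
    · exact house_unique hN haN (by rw [hab]; exact hbN)
    · -- a covered, b gets last resort: m' a = lastResort b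
      have hadj : I.adj a (I.lastResort b) := by
        have := hE₁E (hN.1 haN)
        rwa [show m' a = I.lastResort b from hab.trans hbe] at this
      exact I.lastResort_only b a hadj
    · exfalso
      apply hbH
      refine ⟨a, ?_⟩
      rw [← hbe, ← hab]
      exact haN
    · have hadj : I.adj b (I.lastResort a) := by
        have := hE₁E (hN.1 hbN)
        rwa [show m' b = I.lastResort a from hab.symm.trans hae] at this
      exact (I.lastResort_only a b hadj).symm
    · exact I.lastResort_injective (by rw [← hae, ← hbe, hab])
    · -- m' a = lastResort a, m' b = m b
      have : m b = I.lastResort a := by rw [← hbe, ← hab, hae]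
      exact (I.lastResort_only a b (this ▸ hadjm b)).symm
    · exfalso
      apply haH
      refine ⟨b, ?_⟩
      rw [← hae, hab]
      exact hbN
    · have : m a = I.lastResort b := by rw [← hae, hab, hbe]
      exact I.lastResort_only b a (this ▸ hadjm a)
    · exact hinj (by rw [← hae, ← hbe, hab])
  set M2 : Set (A × H) := {p : A × H | p.2 = m' p.1} with hM2def
  have hM2 : I.IsMatching M2 := by
    refine ⟨?_, ?_, ?_⟩
    · intro p hp
      have hpe : p = (p.1, m' p.1) := Prod.ext rfl hp
      rw [hpe]
      exact hadj' p.1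
    · intro p hp q hq hpq
      exact Prod.ext hpq (by rw [show p.2 = m' p.1 from hp, show q.2 = m' q.1 from hq, hpq])
    · intro p hp q hq hpq
      have := hm'inj (show m' p.1 = m' q.1 by
        rw [← show p.2 = m' p.1 from hp, ← show q.2 = m' q.1 from hq, hpq])
      exact Prod.ext this hpq
  have hpref1 : ∀ a, Prefers I M2 M a ↔ I.rank a (m' a) < I.rank a (m a) := by
    intro a
    constructor
    · rintro ⟨h, hh, hlt⟩
      have he : h = m' a := hh
      subst he
      exact hlt _ (hmM a)
    · intro hlt
      exact ⟨m' a, rfl, fun h' hh' => by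
        rw [show h' = m a from congrArg Prod.snd (hM.1.2.1 _ hh' _ (hmM a) rfl)]
        exact hlt⟩
  have hpref2 : ∀ a, Prefers I M M2 a ↔ I.rank a (m a) < I.rank a (m' a) := by
    intro a
    constructor
    · rintro ⟨h, hh, hlt⟩
      have he : h = m a := (hmeq _).mp hh
      subst he
      exact hlt _ rfl
    · intro hlt
      refine ⟨m a, hmM a, fun h' hh' => ?_⟩
      have : h' = m' a := hh'
      rw [this]
      exact hlt
  have hGain : {a | Prefers I M2 M a} = Gain I m N := by
    ext a
    simp only [Set.mem_setOf_eq, hpref1 a]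
    constructor
    · intro hlt
      rcases hm'cases a with ⟨ha, haN⟩ | ⟨ha, haH, hae⟩ | ⟨ha, haH, hae⟩
      · refine ⟨ha, fun hfc => ?_⟩
        exact absurd hlt (not_lt.mpr (hfc.2 (m' a) (hadj' a)))
      · exfalso
        rw [hae] at hlt
        by_cases hma : m a = I.lastResort a
        · rw [hma] at hlt; exact lt_irrefl _ hlt
        · exact absurd hlt (not_lt.mpr (le_of_lt (I.lastResort_worst a (m a) (hadjm a) hma)))
      · rw [hae] at hlt; exact absurd hlt (lt_irrefl _)
    · rintro ⟨hcov, hnfc⟩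
      have hf := hm'f a hcov
      have : ¬ ∀ h', I.adj a h' → I.rank a (m a) ≤ I.rank a h' :=
        fun hall => hnfc ⟨hadjm a, hall⟩
      push_neg at this
      obtain ⟨h₀, hadj₀, hlt₀⟩ := this
      exact lt_of_le_of_lt (hf.2 h₀ hadj₀) hlt₀
  have hLoss : {a | Prefers I M M2 a} = Loss I m N := by
    ext a
    simp only [Set.mem_setOf_eq, hpref2 a]
    constructor
    · intro hlt
      rcases hm'cases a with ⟨ha, haN⟩ | ⟨ha, haH, hae⟩ | ⟨ha, haH, hae⟩
      · exfalso
        exact absurd hlt (not_lt.mpr ((hm'f a ha).2 (m a) (hadjm a)))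
      · exact ⟨ha, haH⟩
      · rw [hae] at hlt; exact absurd hlt (lt_irrefl _)
    · rintro ⟨hcov, hcH⟩
      rcases hm'cases a with ⟨ha, haN⟩ | ⟨ha, haH, hae⟩ | ⟨ha, haH, hae⟩
      · exact absurd ha hcov
      · rw [hae]
        exact I.lastResort_worst a (m a) (hadjm a) (hml a hcov hcH)
      · exact absurd hcH haH
  have hnp := hM.2 M2 hM2
  unfold HATInstance.MorePopular at hnp
  rw [not_lt, Nat.card_coe_set_eq, Nat.card_coe_set_eq, hGain, hLoss] at hnp
  exact hnp

end Popularity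

end PopAux

open PopAux

open HATInstance in
/-- If `M` is a popular matching of the HAT instance `G`, then `M ∩ E₁` is a maximum
matching of the first-choice graph `G₁`. -/
theorem popular_inter_firstChoice_isMaxMatching
    {A H : Type*} [Fintype A] [Fintype H]
    (I : HATInstance A H) (M : Set (A × H)) (hM : IsPopular I M) :
    IsMaxMatchingIn I.firstChoiceEdges (M ∩ I.firstChoiceEdges) := by
  classical
  have hm := fun a => all_matched I M hM a
  set m : A → H := fun a => (hm a).choose with hmdef
  have hmM : ∀ a, (a, m a) ∈ M := fun a => (hm a).choose_spec
  have hmeq : ∀ p : A × H, p ∈ M ↔ p.2 = m p.1 := by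
    intro p
    constructor
    · intro hp
      exact congrArg Prod.snd (hM.1.2.1 p hp (p.1, m p.1) (hmM p.1) rfl)
    · intro hp
      rw [show p = (p.1, m p.1) from Prod.ext rfl hp]
      exact hmM p.1
  have hinj : Function.Injective m := by
    intro a b hab
    exact house_unique hM.1 (hmM a) (by rw [hab]; exact hmM b)
  constructor
  · exact ⟨Set.inter_subset_right, fun p hp q hq h => hM.1.2.1 p hp.1 q hq.1 h,
      fun p hp q hq h => hM.1.2.2 p hp.1 q hq.1 h⟩
  · intro N hN
    have hcore := core I m hinj (first_nonempty I) (star I M hM m hmeq) N hN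
    have himg : M ∩ I.firstChoiceEdges = (fun a => (a, m a)) '' fcS I m := by
      ext p
      constructor
      · rintro ⟨hp1, hp2⟩
        have hpe : p.2 = m p.1 := (hmeq p).mp hp1
        have hfc : p.1 ∈ fcS I m := by
          have : p.2 ∈ I.firstChoices p.1 := hp2
          rwa [hpe] at this
        exact ⟨p.1, hfc, Prod.ext rfl hpe.symm⟩
      · rintro ⟨a, ha, rfl⟩
        exact ⟨hmM a, ha⟩
    rw [himg, Set.ncard_image_of_injective _ (fun a b hab => congrArg Prod.fst hab)]
    exact hcore
end

section
/- Let G₁ be a bipartite graph and M₁ a maximum matching of G₁. With respect to M₁, call a vertex v even (respectively odd) if there is an even-length (respectively odd-length) alternating path from some M₁-unmatched vertex to v, and unreachable if no alternating path from an unmatched vertex reaches v. Then the sets E (even), O (odd) and U (unreachable) are pairwise disjoint, and every maximum matching of G₁ induces the same partition of the vertices into even, odd and unreachable vertices. -/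
/-- `M` is a matching of the graph `G`: a set of edges of `G` in which every vertex
lies in at most one edge. -/
def IsGraphMatching {V : Type*} (G : SimpleGraph V) (M : Set (Sym2 V)) : Prop :=
  M ⊆ G.edgeSet ∧ ∀ e ∈ M, ∀ e' ∈ M, ∀ v : V, v ∈ e → v ∈ e' → e = e'

/-- A maximum (cardinality) matching of `G`. -/
def IsMaximumMatching {V : Type*} (G : SimpleGraph V) (M : Set (Sym2 V)) : Prop :=
  IsGraphMatching G M ∧ ∀ N : Set (Sym2 V), IsGraphMatching G N → N.ncard ≤ M.ncard

/-- A vertex is unmatched by `M` if it lies in no edge of `M`. -/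
def UnmatchedVtx {V : Type*} (M : Set (Sym2 V)) (v : V) : Prop := ∀ e ∈ M, v ∉ e

/-- A walk is alternating with respect to the matching `M` (as a walk starting at an
unmatched vertex) if its edges alternately avoid and belong to `M`, starting with an
edge not in `M`. -/
def IsAlternatingWalk {V : Type*} {G : SimpleGraph V} {u v : V} (M : Set (Sym2 V))
    (p : G.Walk u v) : Prop :=
  ∀ (i : ℕ) (h : i < p.edges.length), (p.edges.get ⟨i, h⟩ ∈ M ↔ i % 2 = 1)

/-- `v` is an even vertex: there is an even-length alternating path from some
`M`-unmatched vertex to `v`. -/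
def EvenVtx {V : Type*} (G : SimpleGraph V) (M : Set (Sym2 V)) (v : V) : Prop :=
  ∃ u, UnmatchedVtx M u ∧ ∃ p : G.Walk u v, p.IsPath ∧ IsAlternatingWalk M p ∧ Even p.length

/-- `v` is an odd vertex: there is an odd-length alternating path from some
`M`-unmatched vertex to `v`. -/
def OddVtx {V : Type*} (G : SimpleGraph V) (M : Set (Sym2 V)) (v : V) : Prop :=
  ∃ u, UnmatchedVtx M u ∧ ∃ p : G.Walk u v, p.IsPath ∧ IsAlternatingWalk M p ∧ Odd p.length

/-- `v` is unreachable: no alternating path from an `M`-unmatched vertex reaches `v`. -/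
def UnreachableVtx {V : Type*} (G : SimpleGraph V) (M : Set (Sym2 V)) (v : V) : Prop :=
  ¬ ∃ u, UnmatchedVtx M u ∧ ∃ p : G.Walk u v, p.IsPath ∧ IsAlternatingWalk M p

/-- `G` is bipartite. -/
def IsBipartite {V : Type*} (G : SimpleGraph V) : Prop :=
  ∃ s : Set V, ∀ ⦃u v : V⦄, G.Adj u v → (u ∈ s ↔ v ∉ s)

section Lemmas
open SimpleGraph

variable {V : Type*} {G : SimpleGraph V}

lemma walk_edges_get {u v : V} (p : G.Walk u v) (i : ℕ) (h : i < p.edges.length) :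
    p.edges.get ⟨i, h⟩ = s(p.getVert i, p.getVert (i + 1)) := by
  induction p generalizing i with
  | nil => simp at h
  | cons hadj q ih =>
    cases i with
    | zero => simp [SimpleGraph.Walk.edges_cons, SimpleGraph.Walk.getVert_zero,
        SimpleGraph.Walk.getVert_cons_succ]
    | succ n =>
      simp only [SimpleGraph.Walk.edges_cons, SimpleGraph.Walk.getVert_cons_succ]
      simp only [List.get_eq_getElem, List.getElem_cons_succ]
      exact ih n _

lemma walk_support_get {u v : V} (p : G.Walk u v) (i : ℕ) (h : i < p.support.length) :
    p.support.get ⟨i, h⟩ = p.getVert i := by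
  induction p generalizing i with
  | nil =>
    simp only [SimpleGraph.Walk.support_nil, List.length_singleton] at h
    interval_cases i
    simp
  | cons hadj q ih =>
    cases i with
    | zero => simp
    | succ n =>
      simp only [SimpleGraph.Walk.support_cons, SimpleGraph.Walk.getVert_cons_succ]
      simp only [List.get_eq_getElem, List.getElem_cons_succ]
      exact ih n _

lemma path_getVert_inj {u v : V} {p : G.Walk u v} (hp : p.IsPath) {i j : ℕ}
    (hi : i ≤ p.length) (hj : j ≤ p.length) (hij : p.getVert i = p.getVert j) : i = j := by
  have hs : p.support.length = p.length + 1 := SimpleGraph.Walk.length_support p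
  have h1 : i < p.support.length := by omega
  have h2 : j < p.support.length := by omega
  have := hp.support_nodup
  have := List.Nodup.get_inj_iff this (i := ⟨i, h1⟩) (j := ⟨j, h2⟩)
  rw [walk_support_get p i h1, walk_support_get p j h2] at this
  simpa using this.mp hij

lemma bip_parity {s : Set V} (hs : ∀ ⦃a b : V⦄, G.Adj a b → (a ∈ s ↔ b ∉ s)) {u v : V}
    (p : G.Walk u v) : ∀ i ≤ p.length, (p.getVert i ∈ s ↔ (u ∈ s ↔ Even i)) := by
  intro i
  induction i with
  | zero => intro _; simp [SimpleGraph.Walk.getVert_zero]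
  | succ n ih =>
    intro hn
    have h1 : n ≤ p.length := by omega
    have h2 := ih h1
    have hadj := p.adj_getVert_succ (by omega : n < p.length)
    have h3 := hs hadj
    have : Even (n + 1) ↔ ¬ Even n := by
      constructor
      · intro h he; exact (Nat.even_add_one.mp h) he
      · intro h; exact Nat.even_add_one.mpr h
    tauto

lemma bip_parity_end {s : Set V} (hs : ∀ ⦃a b : V⦄, G.Adj a b → (a ∈ s ↔ b ∉ s)) {u v : V}
    (p : G.Walk u v) : (v ∈ s ↔ (u ∈ s ↔ Even p.length)) := by
  have := bip_parity hs p p.length le_rfl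
  rwa [SimpleGraph.Walk.getVert_length] at this

lemma prefix_odd {s : Set V} (hs : ∀ ⦃a b : V⦄, G.Adj a b → (a ∈ s ↔ b ∉ s)) {u w v : V}
    (p : G.Walk u w) (q : G.Walk u v) (hL : Even p.length) (hadj : G.Adj w v) :
    Odd q.length := by
  have h1 := bip_parity_end hs p
  have h2 := bip_parity_end hs q
  have h3 := hs hadj
  rw [← Nat.not_even_iff_odd]
  tauto

lemma range_filter_odd (n : ℕ) :
    ((Finset.range n).filter (fun i => i % 2 = 1)).card = n / 2 := by
  induction n with
  | zero => simp
  | succ m ih =>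
    rw [Finset.range_add_one, Finset.filter_insert]
    by_cases h : m % 2 = 1
    · rw [if_pos h, Finset.card_insert_of_notMem (by simp)]; omega
    · rw [if_neg h]; omega

lemma range_filter_not_odd (n : ℕ) :
    ((Finset.range n).filter (fun i => ¬ i % 2 = 1)).card = n - n / 2 := by
  classical
  have h := Finset.card_filter_add_card_filter_not
    (s := Finset.range n) (p := fun i => i % 2 = 1)
  rw [range_filter_odd n, Finset.card_range] at h
  omega

lemma fin_setOf_ncard (n : ℕ) (P : ℕ → Prop) [DecidablePred P] :
    {i : Fin n | P i.val}.ncard = ((Finset.range n).filter P).card := by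
  classical
  rw [Set.ncard_eq_toFinset_card']
  apply Finset.card_bij (fun (i : Fin n) _ => (i : ℕ))
  · intro a ha
    simp only [Set.toFinset_setOf, Finset.mem_filter, Finset.mem_univ, true_and] at ha
    simp [a.isLt, ha]
  · intro a _ b _ hab; exact Fin.val_injective hab
  · intro b hb
    simp only [Finset.mem_filter, Finset.mem_range] at hb
    exact ⟨⟨b, hb.1⟩, by simp [hb.2], rfl⟩

lemma list_alt_ncard {α : Type*} (l : List α) (hl : l.Nodup) (M : Set α)
    (h : ∀ i (hi : i < l.length), l.get ⟨i, hi⟩ ∈ M ↔ i % 2 = 1) :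
    {e | e ∈ l ∧ e ∈ M}.ncard = l.length / 2 ∧
    {e | e ∈ l ∧ e ∉ M}.ncard = l.length - l.length / 2 := by
  classical
  have hinj : Function.Injective l.get := List.nodup_iff_injective_get.mp hl
  have h1 : {e | e ∈ l ∧ e ∈ M} = l.get '' {i : Fin l.length | (i : ℕ) % 2 = 1} := by
    ext e
    simp only [Set.mem_setOf_eq, Set.mem_image]
    constructor
    · rintro ⟨hel, heM⟩
      obtain ⟨i, rfl⟩ := List.mem_iff_get.mp hel
      exact ⟨i, (h i i.isLt).mp heM, rfl⟩
    · rintro ⟨i, hi, rfl⟩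
      exact ⟨List.get_mem _ _, (h i i.isLt).mpr hi⟩
  have h2 : {e | e ∈ l ∧ e ∉ M} = l.get '' {i : Fin l.length | ¬ (i : ℕ) % 2 = 1} := by
    ext e
    simp only [Set.mem_setOf_eq, Set.mem_image]
    constructor
    · rintro ⟨hel, heM⟩
      obtain ⟨i, rfl⟩ := List.mem_iff_get.mp hel
      exact ⟨i, fun hc => heM ((h i i.isLt).mpr hc), rfl⟩
    · rintro ⟨i, hi, rfl⟩
      exact ⟨List.get_mem _ _, fun hc => hi ((h i i.isLt).mp hc)⟩
  rw [h1, h2, Set.ncard_image_of_injective _ hinj, Set.ncard_image_of_injective _ hinj,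
    fin_setOf_ncard l.length (fun i => i % 2 = 1), fin_setOf_ncard l.length (fun i => ¬ i % 2 = 1), range_filter_odd, range_filter_not_odd]
  exact ⟨rfl, rfl⟩


lemma flip_matching {M : Set (Sym2 V)} {u v : V} (hM : IsGraphMatching G M)
    (p : G.Walk u v) (hp : p.IsPath) (halt : IsAlternatingWalk M p)
    (hu : UnmatchedVtx M u) (hend : p.length % 2 = 1 → UnmatchedVtx M v) :
    ∃ M' : Set (Sym2 V), IsGraphMatching G M' ∧
      (M.Finite → M'.ncard = M.ncard + p.length % 2) ∧
      (p.length % 2 = 0 → UnmatchedVtx M' v) := by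
  classical
  set l := p.edges with hl
  set n := p.length with hn
  have hln : l.length = n := p.length_edges
  set S : Set (Sym2 V) := {e | e ∈ l} with hS
  refine ⟨(M \ S) ∪ (S \ M), ⟨?_, ?_⟩, ?_, ?_⟩
  · -- subset of edge set
    rintro e (⟨he, -⟩ | ⟨he, -⟩)
    · exact hM.1 he
    · exact p.edges_subset_edgeSet he
  · -- matching property
    have hgv : ∀ (i : ℕ) (hi : i < l.length), l.get ⟨i, hi⟩ = s(p.getVert i, p.getVert (i+1)) :=
      fun i hi => walk_edges_get p i hi
    -- claim A
    have claimA : ∀ (x : V) (j : ℕ) (hj : j < l.length), j % 2 = 0 →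
        x ∈ l.get ⟨j, hj⟩ → ∀ e ∈ M, x ∈ e → e ∈ S := by
      intro x j hj hj2 hx e he hxe
      rw [hgv j hj, Sym2.mem_iff] at hx
      rcases hx with rfl | rfl
      · rcases Nat.eq_zero_or_pos j with rfl | hjpos
        · rw [p.getVert_zero] at hxe
          exact absurd hxe (hu e he)
        · have hj1 : j - 1 < l.length := by omega
          have hmem : l.get ⟨j - 1, hj1⟩ ∈ M := (halt _ _).mpr (by omega)
          have hxin : p.getVert j ∈ l.get ⟨j - 1, hj1⟩ := by
            rw [hgv]
            have : j - 1 + 1 = j := by omega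
            rw [this, Sym2.mem_iff]
            right; rfl
          have := hM.2 e he _ hmem _ hxe hxin
          rw [this]
          exact List.get_mem _ _
      · rcases Nat.lt_or_ge (j + 1) l.length with hj1 | hj1
        · have hmem : l.get ⟨j + 1, hj1⟩ ∈ M := (halt _ _).mpr (by omega)
          have hxin : p.getVert (j + 1) ∈ l.get ⟨j + 1, hj1⟩ := by
            rw [hgv, Sym2.mem_iff]; left; rfl
          have := hM.2 e he _ hmem _ hxe hxin
          rw [this]
          exact List.get_mem _ _
        · have hj1' : j + 1 = n := by omega
          have hodd : n % 2 = 1 := by omega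
          have : p.getVert (j + 1) = v := by rw [hj1', hn]; exact p.getVert_length
          rw [this] at hxe
          exact absurd hxe (hend hodd e he)
    rintro e (⟨he, heS⟩ | ⟨heS, he⟩) e' (⟨he', heS'⟩ | ⟨heS', he'⟩) x hx hx'
    · exact hM.2 e he e' he' x hx hx'
    · exfalso
      obtain ⟨⟨j, hj⟩, rfl⟩ := List.mem_iff_get.mp heS'
      have hj2 : j % 2 = 0 := by
        have := halt j hj
        rcases Nat.mod_two_eq_zero_or_one j with h | h
        · exact h
        · exact absurd (this.mpr h) he'
      exact heS (claimA x j hj hj2 hx' e he hx)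
    · exfalso
      obtain ⟨⟨j, hj⟩, rfl⟩ := List.mem_iff_get.mp heS
      have hj2 : j % 2 = 0 := by
        have := halt j hj
        rcases Nat.mod_two_eq_zero_or_one j with h | h
        · exact h
        · exact absurd (this.mpr h) he
      exact heS' (claimA x j hj hj2 hx e' he' hx')
    · -- both path edges not in M
      obtain ⟨⟨i, hi⟩, rfl⟩ := List.mem_iff_get.mp heS
      obtain ⟨⟨j, hj⟩, rfl⟩ := List.mem_iff_get.mp heS'
      have hi2 : i % 2 = 0 := by
        rcases Nat.mod_two_eq_zero_or_one i with h | h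
        · exact h
        · exact absurd ((halt i hi).mpr h) he
      have hj2 : j % 2 = 0 := by
        rcases Nat.mod_two_eq_zero_or_one j with h | h
        · exact h
        · exact absurd ((halt j hj).mpr h) he'
      suffices hij : i = j by subst hij; rfl
      rw [hgv i hi, Sym2.mem_iff] at hx
      rw [hgv j hj, Sym2.mem_iff] at hx'
      have hilen : i < n := by omega
      have hjlen : j < n := by omega
      rcases hx with h1 | h1 <;> rcases hx' with h2 | h2 <;>
        [ (have := path_getVert_inj hp (by omega : i ≤ n) (by omega : j ≤ n) (h1.symm.trans h2));
          (have := path_getVert_inj hp (by omega : i ≤ n) (by omega : j + 1 ≤ n) (h1.symm.trans h2));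
          (have := path_getVert_inj hp (by omega : i + 1 ≤ n) (by omega : j ≤ n) (h1.symm.trans h2));
          (have := path_getVert_inj hp (by omega : i + 1 ≤ n) (by omega : j + 1 ≤ n) (h1.symm.trans h2))] <;>
        omega
  · -- cardinality
    intro hMfin
    have hnodup : l.Nodup := hp.isTrail.edges_nodup
    have hcounts := list_alt_ncard l hnodup M halt
    have hSM : S \ M = {e | e ∈ l ∧ e ∉ M} := by ext e; simp [hS]
    have hMS : M \ S = M \ (M ∩ {e | e ∈ l ∧ e ∈ M}) := by
      ext e; simp only [Set.mem_diff, Set.mem_inter_iff, Set.mem_setOf_eq, hS]; tauto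
    have hsub : M ∩ {e | e ∈ l ∧ e ∈ M} ⊆ M := Set.inter_subset_left
    have hMScard : (M \ S).ncard = M.ncard - (l.length / 2) := by
      rw [hMS, Set.ncard_diff (Set.inter_subset_left) (hMfin.subset Set.inter_subset_left)]
      congr 1
      have : M ∩ {e | e ∈ l ∧ e ∈ M} = {e | e ∈ l ∧ e ∈ M} := by
        ext e; simp only [Set.mem_inter_iff, Set.mem_setOf_eq]; tauto
      rw [this, hcounts.1]
    have hdisj : Disjoint (M \ S) (S \ M) := by
      rw [Set.disjoint_left]; rintro e ⟨-, h2⟩ ⟨h3, -⟩; exact h2 h3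
    rw [Set.ncard_union_eq hdisj (hMfin.diff : (M \ S).Finite) ((l.finite_toSet).subset (fun e he => he.1)),
      hMScard, hSM, hcounts.2]
    have hle : l.length / 2 ≤ M.ncard := by
      have h1 : {e | e ∈ l ∧ e ∈ M} ⊆ M := fun e he => he.2
      have := Set.ncard_le_ncard h1 hMfin
      omega
    omega
  · -- end unmatched when even
    intro h0 e he hve
    rcases he with ⟨he, heS⟩ | ⟨heS, he⟩
    · rcases Nat.eq_zero_or_pos n with hn0 | hnpos
      · have huv : u = v := by
          have := p.getVert_of_length_le (by omega : p.length ≤ 0)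
          rw [p.getVert_zero] at this
          exact this
        exact hu e he (huv ▸ hve)
      · have hn1 : n - 1 < l.length := by omega
        have hmem : l.get ⟨n - 1, hn1⟩ ∈ M := (halt _ _).mpr (by omega)
        have hvin : v ∈ l.get ⟨n - 1, hn1⟩ := by
          rw [walk_edges_get, Sym2.mem_iff]
          have : n - 1 + 1 = n := by omega
          rw [this]
          right
          exact (p.getVert_length).symm
        exact heS ((hM.2 e he _ hmem v hve hvin) ▸ List.get_mem _ _)
    · obtain ⟨⟨j, hj⟩, rfl⟩ := List.mem_iff_get.mp heS
      have hj2 : j % 2 = 0 := by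
        rcases Nat.mod_two_eq_zero_or_one j with h | h
        · exact h
        · exact absurd ((halt j hj).mpr h) he
      rw [walk_edges_get, Sym2.mem_iff] at hve
      have hvg : v = p.getVert n := (p.getVert_length).symm
      rcases hve with h1 | h1
      · have := path_getVert_inj hp (by omega : j ≤ n) (le_rfl) (h1.symm.trans (hvg ▸ rfl))
        omega
      · have := path_getVert_inj hp (by omega : j + 1 ≤ n) (le_rfl) (h1.symm.trans (hvg ▸ rfl))
        omega

lemma no_augmenting {N : Set (Sym2 V)} (hfin : N.Finite)
    (hNmax : ∀ K : Set (Sym2 V), IsGraphMatching G K → K.ncard ≤ N.ncard)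
    (hN : IsGraphMatching G N) {u v : V} (p : G.Walk u v) (hp : p.IsPath)
    (halt : IsAlternatingWalk N p) (hu : UnmatchedVtx N u) (hv : UnmatchedVtx N v)
    (hodd : p.length % 2 = 1) : False := by
  obtain ⟨M', hM', hcard, -⟩ := flip_matching hN p hp halt hu (fun _ => hv)
  have := hNmax M' hM'
  rw [hcard hfin, hodd] at this
  omega

lemma exists_max_unmatched {M : Set (Sym2 V)} (hfin : M.Finite)
    (hM : IsMaximumMatching G M) {v : V} (hv : EvenVtx G M v) :
    ∃ N : Set (Sym2 V), IsMaximumMatching G N ∧ UnmatchedVtx N v := by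
  obtain ⟨u, hu, p, hp, halt, heven⟩ := hv
  have h2 : p.length % 2 = 0 := Nat.even_iff.mp heven
  obtain ⟨M', hM', hcard, hunm⟩ := flip_matching hM.1 p hp halt hu (fun h => by omega)
  refine ⟨M', ⟨hM', fun K hK => ?_⟩, hunm h2⟩
  have := hM.2 K hK
  rw [hcard hfin, h2]
  omega

lemma even_of_unmatched [Fintype V] {N M : Set (Sym2 V)} (hN : IsMaximumMatching G N)
    (hM : IsGraphMatching G M) {v : V} (hv : UnmatchedVtx N v) : EvenVtx G M v := by
  classical
  have hNfin : N.Finite := Set.toFinite N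
  suffices claim : ∀ (n : ℕ) (x : V) (q : G.Walk v x), q.IsPath →
      (∀ (i : ℕ) (hi : i < q.edges.length),
        q.edges.get ⟨i, hi⟩ ∈ (if i % 2 = 0 then M \ N else N \ M)) →
      Fintype.card V ≤ q.length + n → EvenVtx G M v by
    exact claim (Fintype.card V) v SimpleGraph.Walk.nil (SimpleGraph.Walk.IsPath.nil)
      (by intro i hi; simp at hi) (by simp)
  intro n
  induction n with
  | zero =>
    intro x q hq _ hcard
    exfalso
    have h1 : q.support.length ≤ Fintype.card V := hq.support_nodup.length_le_card
    have h2 : q.support.length = q.length + 1 := q.length_support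
    omega
  | succ n ih =>
    intro x q hq hinv hcard
    have hlen : q.edges.length = q.length := q.length_edges
    set L := q.length with hLdef
    have hxL : q.getVert L = x := q.getVert_length
    by_cases hL : L % 2 = 0
    · by_cases hxM : ∃ e ∈ M, x ∈ e
      · -- extend with an M-edge
        obtain ⟨e, heM, hxe⟩ := hxM
        set y := Sym2.Mem.other hxe with hy
        have hexy : e = s(x, y) := (Sym2.other_spec hxe).symm
        have hadj : G.Adj x y := by
          rw [← SimpleGraph.mem_edgeSet, ← hexy]
          exact hM.1 heM
        have heN : e ∉ N := by
          intro heN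
          rcases Nat.eq_zero_or_pos L with hL0 | hLpos
          · have hvx : v = x := by
              have := q.getVert_of_length_le (by omega : q.length ≤ 0)
              rw [q.getVert_zero] at this; exact this
            exact hv e heN (hvx ▸ hxe)
          · have h1 : L - 1 < q.edges.length := by omega
            have h2 := hinv (L - 1) h1
            rw [if_neg (by omega)] at h2
            have hxin : x ∈ q.edges.get ⟨L - 1, h1⟩ := by
              rw [walk_edges_get, Sym2.mem_iff]
              right
              have : L - 1 + 1 = L := by omega
              rw [this, hxL]
            have := hN.1.2 e heN _ h2.1 x hxe hxin
            rw [this] at heM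
            exact h2.2 heM
        have hyx : y ≠ x := fun h => hadj.ne (h ▸ rfl)
        have hyfresh : y ∉ q.support := by
          intro hmem
          obtain ⟨j, hgj, hjle⟩ := SimpleGraph.Walk.mem_support_iff_exists_getVert.mp hmem
          have hjL : j < L := by
            rcases Nat.lt_or_ge j L with h | h
            · exact h
            · exfalso; apply hyx; rw [← hgj, q.getVert_of_length_le (by omega)]
          set k := if j % 2 = 0 then j else j - 1 with hk
          have hk2 : k % 2 = 0 := by rcases Nat.mod_two_eq_zero_or_one j with h | h <;> simp [hk, h] <;> omega
          have hkL : k < q.edges.length := by rw [hlen]; rcases Nat.mod_two_eq_zero_or_one j with h | h <;> simp [hk, h] <;> omega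
          have hek := hinv k hkL
          rw [if_pos hk2] at hek
          have hyink : y ∈ q.edges.get ⟨k, hkL⟩ := by
            rw [walk_edges_get, Sym2.mem_iff]
            rcases Nat.mod_two_eq_zero_or_one j with h | h
            · left; rw [hk, if_pos h, hgj]
            · right
              have h0 : j ≠ 0 := by omega
              have : k + 1 = j := by rw [hk, if_neg (by omega)]; omega
              rw [this, hgj]
          have hee : e = q.edges.get ⟨k, hkL⟩ :=
            hM.2 e heM _ hek.1 y (hexy ▸ (Sym2.mem_mk_right x y)) hyink
          have hxink : x ∈ q.edges.get ⟨k, hkL⟩ := hee ▸ (hexy ▸ Sym2.mem_mk_left x y)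
          rw [walk_edges_get, Sym2.mem_iff] at hxink
          rcases hxink with h1 | h1
          · have := path_getVert_inj hq (by omega : k ≤ L) (le_rfl) (h1.symm.trans hxL.symm ▸ rfl)
            omega
          · have h2 : q.getVert (k+1) = q.getVert L := by rw [← h1, hxL]
            have := path_getVert_inj hq (by omega : k + 1 ≤ L) (le_rfl) h2
            omega
        refine ih y (q.concat hadj) ?_ ?_ ?_
        · apply SimpleGraph.Walk.IsPath.mk'
          rw [q.support_concat hadj]
          exact (List.concat_eq_append ..) ▸ hq.support_nodup.concat hyfresh
        · intro i hi
          have heq : (q.concat hadj).edges = q.edges ++ [s(x,y)] := by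
            rw [q.edges_concat hadj, List.concat_eq_append]
          have hi2 : i < (q.edges ++ [s(x,y)]).length := heq ▸ hi
          have hilen : i < q.edges.length + 1 := by
            simpa using hi2
          have hgeteq : (q.concat hadj).edges.get ⟨i, hi⟩ = (q.edges ++ [s(x,y)])[i]'hi2 := by
            simp only [List.get_eq_getElem]
            exact List.getElem_of_eq heq _
          rw [hgeteq]
          rcases Nat.lt_or_ge i q.edges.length with h | h
          · rw [List.getElem_append_left h]
            exact hinv i h
          · have hieq : i = q.edges.length := by omega
            rw [List.getElem_concat_length hieq, if_pos (by omega)]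
            exact ⟨hexy ▸ heM, fun hc => heN (hexy ▸ hc)⟩
        · rw [q.length_concat hadj]
          omega
      · -- terminal: x is M-unmatched, reverse path is even alternating w.r.t. M
        refine ⟨x, fun e he hx => hxM ⟨e, he, hx⟩, q.reverse, hq.reverse, ?_, ?_⟩
        · intro j hj
          have hj' : j < L := by
            rw [q.edges_reverse, List.length_reverse, hlen] at hj; exact hj
          have hget : q.reverse.edges.get ⟨j, hj⟩ = q.edges.get ⟨L - 1 - j, by omega⟩ := by
            simp only [q.edges_reverse, List.get_eq_getElem, List.getElem_reverse, hlen]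
          rw [hget]
          have hk := hinv (L - 1 - j) (by omega)
          rcases Nat.mod_two_eq_zero_or_one j with h | h
          · have : ¬ (L - 1 - j) % 2 = 0 := by omega
            rw [if_neg this] at hk
            simp only [h]
            constructor
            · intro hc; exact absurd hc hk.2
            · omega
          · have : (L - 1 - j) % 2 = 0 := by omega
            rw [if_pos this] at hk
            simp only [h]
            exact iff_of_true hk.1 trivial
        · rw [q.length_reverse, Nat.even_iff]
          exact hL
    · by_cases hxN : ∃ e ∈ N, x ∈ e
      · -- extend with an N-edge
        obtain ⟨e, heN, hxe⟩ := hxN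
        set y := Sym2.Mem.other hxe with hy
        have hexy : e = s(x, y) := (Sym2.other_spec hxe).symm
        have hadj : G.Adj x y := by
          rw [← SimpleGraph.mem_edgeSet, ← hexy]
          exact hN.1.1 heN
        have hLpos : 0 < L := by omega
        have heM : e ∉ M := by
          intro heM
          have h1 : L - 1 < q.edges.length := by omega
          have h2 := hinv (L - 1) h1
          rw [if_pos (by omega)] at h2
          have hxin : x ∈ q.edges.get ⟨L - 1, h1⟩ := by
            rw [walk_edges_get, Sym2.mem_iff]
            right
            have : L - 1 + 1 = L := by omega
            rw [this, hxL]
          have := hM.2 e heM _ h2.1 x hxe hxin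
          rw [this] at heN
          exact h2.2 heN
        have hyx : y ≠ x := fun h => hadj.ne (h ▸ rfl)
        have hyfresh : y ∉ q.support := by
          intro hmem
          obtain ⟨j, hgj, hjle⟩ := SimpleGraph.Walk.mem_support_iff_exists_getVert.mp hmem
          have hjL : j < L := by
            rcases Nat.lt_or_ge j L with h | h
            · exact h
            · exfalso; apply hyx; rw [← hgj, q.getVert_of_length_le (by omega)]
          have hj0 : j ≠ 0 := by
            intro h0
            rw [h0, q.getVert_zero] at hgj
            exact hv e heN (hgj ▸ (hexy ▸ Sym2.mem_mk_right x y))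
          set k := if j % 2 = 1 then j else j - 1 with hk
          have hk2 : ¬ k % 2 = 0 := by rcases Nat.mod_two_eq_zero_or_one j with h | h <;> simp [hk, h] <;> omega
          have hkL : k < q.edges.length := by rw [hlen]; rcases Nat.mod_two_eq_zero_or_one j with h | h <;> simp [hk, h] <;> omega
          have hek := hinv k hkL
          rw [if_neg hk2] at hek
          have hyink : y ∈ q.edges.get ⟨k, hkL⟩ := by
            rw [walk_edges_get, Sym2.mem_iff]
            rcases Nat.mod_two_eq_zero_or_one j with h | h
            · right
              have : k + 1 = j := by rw [hk, if_neg (by omega)]; omega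
              rw [this, hgj]
            · left; rw [hk, if_pos h, hgj]
          have hee : e = q.edges.get ⟨k, hkL⟩ :=
            hN.1.2 e heN _ hek.1 y (hexy ▸ (Sym2.mem_mk_right x y)) hyink
          have hxink : x ∈ q.edges.get ⟨k, hkL⟩ := hee ▸ (hexy ▸ Sym2.mem_mk_left x y)
          rw [walk_edges_get, Sym2.mem_iff] at hxink
          rcases hxink with h1 | h1
          · have h2 : q.getVert k = q.getVert L := by rw [← h1, hxL]
            have := path_getVert_inj hq (by omega : k ≤ L) (le_rfl) h2
            omega
          · have h2 : q.getVert (k+1) = q.getVert L := by rw [← h1, hxL]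
            have := path_getVert_inj hq (by omega : k + 1 ≤ L) (le_rfl) h2
            omega
        refine ih y (q.concat hadj) ?_ ?_ ?_
        · apply SimpleGraph.Walk.IsPath.mk'
          rw [q.support_concat hadj]
          exact (List.concat_eq_append ..) ▸ hq.support_nodup.concat hyfresh
        · intro i hi
          have heq : (q.concat hadj).edges = q.edges ++ [s(x,y)] := by
            rw [q.edges_concat hadj, List.concat_eq_append]
          have hi2 : i < (q.edges ++ [s(x,y)]).length := heq ▸ hi
          have hilen : i < q.edges.length + 1 := by
            simpa using hi2
          have hgeteq : (q.concat hadj).edges.get ⟨i, hi⟩ = (q.edges ++ [s(x,y)])[i]'hi2 := by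
            simp only [List.get_eq_getElem]
            exact List.getElem_of_eq heq _
          rw [hgeteq]
          rcases Nat.lt_or_ge i q.edges.length with h | h
          · rw [List.getElem_append_left h]
            exact hinv i h
          · have hieq : i = q.edges.length := by omega
            rw [List.getElem_concat_length hieq, if_neg (by omega)]
            exact ⟨hexy ▸ heN, fun hc => heM (hexy ▸ hc)⟩
        · rw [q.length_concat hadj]
          omega
      · -- terminal: x is N-unmatched, q is an N-augmenting path: contradiction
        exfalso
        refine no_augmenting hNfin hN.2 hN.1 q hq ?_ hv (fun e he hx => hxN ⟨e, he, hx⟩) (by omega)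
        intro i hi
        have hk := hinv i hi
        rcases Nat.mod_two_eq_zero_or_one i with h | h
        · rw [if_pos h] at hk
          simp only [h]
          constructor
          · intro hc; exact absurd hc hk.2
          · omega
        · rw [if_neg (by omega)] at hk
          simp only [h]
          exact iff_of_true hk.1 trivial

lemma adj_ends_parity {s : Set V} (hs : ∀ ⦃a b : V⦄, G.Adj a b → (a ∈ s ↔ b ∉ s))
    {u a b : V} (p : G.Walk u a) (q : G.Walk u b) (hab : G.Adj a b) :
    (Even p.length ↔ Odd q.length) := by
  have h1 := bip_parity_end hs p
  have h2 := bip_parity_end hs q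
  have h3 := hs hab
  rw [← Nat.not_even_iff_odd]
  tauto

lemma takeUntil_alternating [DecidableEq V] {M : Set (Sym2 V)} {u v w : V} {p : G.Walk u w}
    (halt : IsAlternatingWalk M p) (hmem : v ∈ p.support) :
    IsAlternatingWalk M (p.takeUntil v hmem) := by
  intro i hi
  have heq : p.edges = (p.takeUntil v hmem).edges ++ (p.dropUntil v hmem).edges := by
    rw [← SimpleGraph.Walk.edges_append, SimpleGraph.Walk.take_spec]
  have hi' : i < p.edges.length := by rw [heq, List.length_append]; omega
  have hg : p.edges.get ⟨i, hi'⟩ = (p.takeUntil v hmem).edges.get ⟨i, hi⟩ := by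
    simp only [List.get_eq_getElem]
    rw [List.getElem_of_eq heq, List.getElem_append_left hi]
  rw [← hg]
  exact halt i hi'

lemma concat_alternating {M : Set (Sym2 V)} {u w v : V} {p : G.Walk u w}
    (halt : IsAlternatingWalk M p) (hadj : G.Adj w v) (heven : p.length % 2 = 0)
    (hnot : s(w, v) ∉ M) : IsAlternatingWalk M (p.concat hadj) := by
  intro i hi
  have heq : (p.concat hadj).edges = p.edges ++ [s(w, v)] := by
    rw [p.edges_concat hadj, List.concat_eq_append]
  have hi2 : i < (p.edges ++ [s(w, v)]).length := heq ▸ hi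
  have hilen : i < p.edges.length + 1 := by simpa using hi2
  have hgeteq : (p.concat hadj).edges.get ⟨i, hi⟩ = (p.edges ++ [s(w, v)])[i]'hi2 := by
    simp only [List.get_eq_getElem]
    exact List.getElem_of_eq heq _
  rw [hgeteq]
  rcases Nat.lt_or_ge i p.edges.length with h | h
  · rw [List.getElem_append_left h]
    exact halt i h
  · have hieq : i = p.edges.length := by omega
    rw [List.getElem_concat_length hieq]
    have : i % 2 = 0 := by rw [hieq, p.length_edges]; exact heven
    exact iff_of_false hnot (by omega)

lemma odd_of_adj_even {s : Set V} (hs : ∀ ⦃a b : V⦄, G.Adj a b → (a ∈ s ↔ b ∉ s))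
    {M : Set (Sym2 V)} (hM : IsGraphMatching G M) {w v : V} (hadj : G.Adj w v)
    (hw : EvenVtx G M w) : OddVtx G M v := by
  classical
  obtain ⟨u, hu, p, hp, halt, heven⟩ := hw
  by_cases hmem : v ∈ p.support
  · exact ⟨u, hu, p.takeUntil v hmem, hp.takeUntil hmem, takeUntil_alternating halt hmem,
      (adj_ends_parity hs p (p.takeUntil v hmem) hadj).mp heven⟩
  · have hwvM : s(w, v) ∉ M := by
      intro hmemM
      set L := p.length with hL
      rcases Nat.eq_zero_or_pos L with h0 | hpos
      · have huw : u = w := by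
          have := p.getVert_of_length_le (by omega : p.length ≤ 0)
          rw [p.getVert_zero] at this; exact this
        exact hu _ hmemM (huw ▸ Sym2.mem_mk_left w v)
      · have h1 : L - 1 < p.edges.length := by rw [p.length_edges]; omega
        have h2 : p.edges.get ⟨L - 1, h1⟩ ∈ M := (halt _ _).mpr (by
          rcases Nat.even_iff.mp heven with h; omega)
        have hwin : w ∈ p.edges.get ⟨L - 1, h1⟩ := by
          rw [walk_edges_get, Sym2.mem_iff]
          right
          have : L - 1 + 1 = L := by omega
          rw [this]
          exact p.getVert_length.symm
        have heq := hM.2 _ hmemM _ h2 w (Sym2.mem_mk_left w v) hwin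
        rw [walk_edges_get] at heq
        have hLL : L - 1 + 1 = L := by omega
        rw [hLL, p.getVert_length] at heq
        rw [Sym2.eq_iff] at heq
        have hvP : v = p.getVert (L - 1) := by
          rcases heq with ⟨h3, h4⟩ | ⟨h3, h4⟩
          · exact absurd h4.symm hadj.ne
          · exact h4
        exact hmem (SimpleGraph.Walk.mem_support_iff_exists_getVert.mpr
          ⟨L - 1, hvP.symm, by omega⟩)
    refine ⟨u, hu, p.concat hadj, ?_, concat_alternating halt hadj (Nat.even_iff.mp heven) hwvM, ?_⟩
    · apply SimpleGraph.Walk.IsPath.mk'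
      rw [p.support_concat hadj]
      exact (List.concat_eq_append ..) ▸ hp.support_nodup.concat hmem
    · rw [p.length_concat hadj]
      exact Even.add_one heven

lemma even_pred_of_odd {s : Set V} (hs : ∀ ⦃a b : V⦄, G.Adj a b → (a ∈ s ↔ b ∉ s))
    {M : Set (Sym2 V)} {v : V} (hv : OddVtx G M v) :
    ∃ w : V, G.Adj w v ∧ EvenVtx G M w := by
  classical
  obtain ⟨u, hu, p, hp, halt, hodd⟩ := hv
  set L := p.length with hL
  have hLpos : 0 < L := by
    rcases hodd with ⟨k, hk⟩; omega
  set w := p.getVert (L - 1) with hw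
  have hadj : G.Adj w v := by
    have := p.adj_getVert_succ (by omega : L - 1 < p.length)
    have hLL : L - 1 + 1 = L := by omega
    rw [hLL, p.getVert_length] at this
    exact this
  have hmem : w ∈ p.support :=
    SimpleGraph.Walk.mem_support_iff_exists_getVert.mpr ⟨L - 1, rfl, by omega⟩
  refine ⟨w, hadj, u, hu, p.takeUntil w hmem, hp.takeUntil hmem,
    takeUntil_alternating halt hmem, ?_⟩
  exact (adj_ends_parity hs (p.takeUntil w hmem) p hadj).mpr hodd

lemma even_invariant [Fintype V] {M N : Set (Sym2 V)} (h1 : IsMaximumMatching G M)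
    (h2 : IsMaximumMatching G N) {v : V} (hv : EvenVtx G M v) : EvenVtx G N v := by
  obtain ⟨K, hK, hvK⟩ := exists_max_unmatched (Set.toFinite M) h1 hv
  exact even_of_unmatched hK h2.1 hvK

lemma even_odd_disjoint [Fintype V] {s : Set V}
    (hs : ∀ ⦃a b : V⦄, G.Adj a b → (a ∈ s ↔ b ∉ s)) {M : Set (Sym2 V)}
    (hM : IsMaximumMatching G M) {v : V} (he : EvenVtx G M v) (ho : OddVtx G M v) : False := by
  obtain ⟨N, hNmax, hvN⟩ := exists_max_unmatched (Set.toFinite M) hM he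
  obtain ⟨w, hadj, hwE⟩ := even_pred_of_odd hs ho
  have hwEN : EvenVtx G N w := even_invariant hM hNmax hwE
  obtain ⟨u, hu, p, hp, halt, hodd⟩ := odd_of_adj_even hs hNmax.1 hadj hwEN
  exact no_augmenting (Set.toFinite N) hNmax.2 hNmax.1 p hp halt hu hvN (Nat.odd_iff.mp hodd)

lemma unreachable_iff {M : Set (Sym2 V)} {v : V} :
    UnreachableVtx G M v ↔ ¬ EvenVtx G M v ∧ ¬ OddVtx G M v := by
  constructor
  · intro h
    constructor
    · rintro ⟨u, hu, p, hp, halt, -⟩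
      exact h ⟨u, hu, p, hp, halt⟩
    · rintro ⟨u, hu, p, hp, halt, -⟩
      exact h ⟨u, hu, p, hp, halt⟩
  · rintro ⟨h1, h2⟩ ⟨u, hu, p, hp, halt⟩
    rcases Nat.even_or_odd p.length with h | h
    · exact h1 ⟨u, hu, p, hp, halt, h⟩
    · exact h2 ⟨u, hu, p, hp, halt, h⟩

end Lemmas

/-- Gallai–Edmonds, part (a): with respect to a maximum matching `M₁` of a
finite bipartite graph `G₁`, the sets of even, odd and unreachable vertices are pairwise
disjoint, and every maximum matching induces the same partition. -/
theorem gallaiEdmonds_partition_disjoint_and_invariant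
    {V : Type*} [Fintype V] (G₁ : SimpleGraph V) (hbip : IsBipartite G₁)
    (M₁ M₂ : Set (Sym2 V))
    (h₁ : IsMaximumMatching G₁ M₁) (h₂ : IsMaximumMatching G₁ M₂) :
    ({v | EvenVtx G₁ M₁ v} ∩ {v | OddVtx G₁ M₁ v} = ∅ ∧
     {v | EvenVtx G₁ M₁ v} ∩ {v | UnreachableVtx G₁ M₁ v} = ∅ ∧
     {v | OddVtx G₁ M₁ v} ∩ {v | UnreachableVtx G₁ M₁ v} = ∅) ∧
    ({v | EvenVtx G₁ M₁ v} = {v | EvenVtx G₁ M₂ v} ∧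
     {v | OddVtx G₁ M₁ v} = {v | OddVtx G₁ M₂ v} ∧
     {v | UnreachableVtx G₁ M₁ v} = {v | UnreachableVtx G₁ M₂ v}) := by
  obtain ⟨s, hs⟩ := hbip
  have hO : ∀ (M N : Set (Sym2 V)), IsMaximumMatching G₁ M → IsMaximumMatching G₁ N →
      ∀ v, OddVtx G₁ M v → OddVtx G₁ N v := by
    intro M N hM hN v hv
    obtain ⟨w, hadj, hwE⟩ := even_pred_of_odd hs hv
    exact odd_of_adj_even hs hN.1 hadj (even_invariant hM hN hwE)
  refine ⟨⟨?_, ?_, ?_⟩, ?_, ?_, ?_⟩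
  · rw [Set.eq_empty_iff_forall_notMem]
    rintro v ⟨hE, hOv⟩
    exact even_odd_disjoint hs h₁ hE hOv
  · rw [Set.eq_empty_iff_forall_notMem]
    rintro v ⟨⟨u, hu, p, hp, halt, -⟩, hU⟩
    exact hU ⟨u, hu, p, hp, halt⟩
  · rw [Set.eq_empty_iff_forall_notMem]
    rintro v ⟨⟨u, hu, p, hp, halt, -⟩, hU⟩
    exact hU ⟨u, hu, p, hp, halt⟩
  · ext v
    exact ⟨fun h => even_invariant h₁ h₂ h, fun h => even_invariant h₂ h₁ h⟩
  · ext v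
    exact ⟨fun h => hO M₁ M₂ h₁ h₂ v h, fun h => hO M₂ M₁ h₂ h₁ v h⟩
  · ext v
    simp only [Set.mem_setOf_eq, unreachable_iff]
    constructor
    · rintro ⟨h1, h2⟩
      exact ⟨fun h => h1 (even_invariant h₂ h₁ h), fun h => h2 (hO M₂ M₁ h₂ h₁ v h)⟩
    · rintro ⟨h1, h2⟩
      exact ⟨fun h => h1 (even_invariant h₁ h₂ h), fun h => h2 (hO M₁ M₂ h₁ h₂ v h)⟩
end
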